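/- Let p be an odd prime and N = p − 1. The coefficients of the polynomial P_N(z)·Q_N(z) ∈ ℚ[z] are p-integral; let f̄ ∈ 𝔽_p[z] denote its reduction modulo p. Then for every z ∈ 𝔽_p with z ≠ 0 and z ≠ 1, f̄(z) = (A_z)² in 𝔽_p, where A_z is the natural number #{(x,y) ∈ 𝔽_p × 𝔽_p : y² = x(x−1)(x−z)} cast into 𝔽_p. (Since the Legendre elliptic curve E_z : y² = x(x−1)(x−z) has exactly one point at infinity, A_z = #E_z(𝔽_p) − 1, so this says f(v; z) ≡ (#E_z(𝔽_p) − 1)² mod p.) -/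

import Mathlib

open Polynomial Finset

noncomputable section

/-- The rising Pochhammer symbol `(q)_k = q(q+1)⋯(q+k-1)` over `ℚ`. -/
def poch (q : ℚ) (k : ℕ) : ℚ := (ascPochhammer ℚ k).eval q

/-- Coefficient of `z^k` in `P_N(z) = ₂F₁(-N/2, N/2+1; -N; z)`. -/
def Pcoef (N k : ℕ) : ℚ :=
  poch (-(N : ℚ) / 2) k * poch ((N : ℚ) / 2 + 1) k /
    (poch (-(N : ℚ)) k * (Nat.factorial k : ℚ))

/-- Coefficient of `z^k` in `Q_N(z) = ₂F₁(-N/2, -3N/2-1; -N; z)`. -/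
def Qcoef (N k : ℕ) : ℚ :=
  poch (-(N : ℚ) / 2) k * poch (-(3 * (N : ℚ)) / 2 - 1) k /
    (poch (-(N : ℚ)) k * (Nat.factorial k : ℚ))

/-- The polynomial `P_N(z)`. -/
def Ppoly (N : ℕ) : ℚ[X] := ∑ k ∈ Finset.range (N / 2 + 1), C (Pcoef N k) * X ^ k

/-- The polynomial `Q_N(z)`. -/
def Qpoly (N : ℕ) : ℚ[X] := ∑ k ∈ Finset.range (N / 2 + 1), C (Qcoef N k) * X ^ k

/-- Reduction of a `p`-integral rational number modulo `p`. -/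
def ratRed (p : ℕ) (q : ℚ) : ZMod p := (q.num : ZMod p) * (q.den : ZMod p)⁻¹

variable {p : ℕ} [Fact p.Prime]


lemma ratRed_spec {q : ℚ} {a b : ℤ} (hb : (b : ZMod p) ≠ 0) (h : q * (b : ℚ) = (a : ℚ)) :
    ¬ p ∣ q.den ∧ ratRed p q = (a : ZMod p) * (b : ZMod p)⁻¹ := by
  have hb0 : b ≠ 0 := by rintro rfl; simp at hb
  have hq : q = (a : ℚ) / (b : ℚ) := by
    field_simp at h ⊢; linarith [h]
  have hden : (q.den : ℤ) ∣ b := by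
    rw [hq, ← Rat.divInt_eq_div]; exact Rat.den_dvd a b
  have hpden : ¬ p ∣ q.den := by
    intro hp
    apply hb
    rw [ZMod.intCast_zmod_eq_zero_iff_dvd]
    exact dvd_trans (Int.natCast_dvd_natCast.mpr hp) hden
  refine ⟨hpden, ?_⟩
  have hd : (q.den : ZMod p) ≠ 0 := by
    rw [Ne, ZMod.natCast_eq_zero_iff]; exact hpden
  -- q.num * b = a * q.den
  have key : (q.num : ℚ) * b = (a : ℚ) * q.den := by
    have hden0 : (q.den : ℚ) ≠ 0 := by exact_mod_cast q.den_ne_zero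
    have := Rat.num_div_den q
    rw [← this] at h
    field_simp at h
    linarith [h]
  have keyZ : q.num * b = a * (q.den : ℤ) := by exact_mod_cast key
  have keyZp : (q.num : ZMod p) * (b : ZMod p) = (a : ZMod p) * (q.den : ZMod p) := by
    have := congrArg (fun t : ℤ => (t : ZMod p)) keyZ
    push_cast at this
    exact this
  rw [ratRed]
  field_simp
  linear_combination keyZp

lemma ratRed_zero : ratRed p 0 = 0 := by simp [ratRed]

lemma ratRed_mul {q r : ℚ} (hq : ¬ p ∣ q.den) (hr : ¬ p ∣ r.den) :
    ¬ p ∣ (q * r).den ∧ ratRed p (q * r) = ratRed p q * ratRed p r := by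
  have hqd : (q.den : ZMod p) ≠ 0 := by rw [Ne, ZMod.natCast_eq_zero_iff]; exact hq
  have hrd : (r.den : ZMod p) ≠ 0 := by rw [Ne, ZMod.natCast_eq_zero_iff]; exact hr
  have hb : (((q.den : ℤ) * (r.den : ℤ) : ℤ) : ZMod p) ≠ 0 := by
    push_cast; exact mul_ne_zero hqd hrd
  have h1 : (q.den : ℚ) ≠ 0 := by exact_mod_cast q.den_ne_zero
  have h2 : (r.den : ℚ) ≠ 0 := by exact_mod_cast r.den_ne_zero
  have e1 : q * (q.den : ℚ) = (q.num : ℚ) := by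
    exact ((div_eq_iff h1).mp (Rat.num_div_den q)).symm
  have e2 : r * (r.den : ℚ) = (r.num : ℚ) := by
    exact ((div_eq_iff h2).mp (Rat.num_div_den r)).symm
  have h : (q * r) * (((q.den : ℤ) * (r.den : ℤ) : ℤ) : ℚ) = ((q.num * r.num : ℤ) : ℚ) := by
    push_cast
    linear_combination (r * (r.den : ℚ)) * e1 + (q.num : ℚ) * e2
  obtain ⟨h1, h2⟩ := ratRed_spec hb h
  refine ⟨h1, ?_⟩
  rw [h2, ratRed, ratRed]
  push_cast
  rw [mul_inv]
  ring

lemma ratRed_add {q r : ℚ} (hq : ¬ p ∣ q.den) (hr : ¬ p ∣ r.den) :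
    ¬ p ∣ (q + r).den ∧ ratRed p (q + r) = ratRed p q + ratRed p r := by
  have hqd : (q.den : ZMod p) ≠ 0 := by rw [Ne, ZMod.natCast_eq_zero_iff]; exact hq
  have hrd : (r.den : ZMod p) ≠ 0 := by rw [Ne, ZMod.natCast_eq_zero_iff]; exact hr
  have hb : (((q.den : ℤ) * (r.den : ℤ) : ℤ) : ZMod p) ≠ 0 := by
    push_cast; exact mul_ne_zero hqd hrd
  have h1 : (q.den : ℚ) ≠ 0 := by exact_mod_cast q.den_ne_zero
  have h2 : (r.den : ℚ) ≠ 0 := by exact_mod_cast r.den_ne_zero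
  have e1 : q * (q.den : ℚ) = (q.num : ℚ) := by
    exact ((div_eq_iff h1).mp (Rat.num_div_den q)).symm
  have e2 : r * (r.den : ℚ) = (r.num : ℚ) := by
    exact ((div_eq_iff h2).mp (Rat.num_div_den r)).symm
  have h : (q + r) * (((q.den : ℤ) * (r.den : ℤ) : ℤ) : ℚ) =
      ((q.num * r.den + r.num * q.den : ℤ) : ℚ) := by
    push_cast
    linear_combination (r.den : ℚ) * e1 + (q.den : ℚ) * e2
  obtain ⟨h1, h2⟩ := ratRed_spec hb h
  refine ⟨h1, ?_⟩
  rw [h2, ratRed, ratRed]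
  push_cast
  field_simp

lemma ratRed_sum {ι : Type*} {s : Finset ι} {f : ι → ℚ} (h : ∀ i ∈ s, ¬ p ∣ (f i).den) :
    ¬ p ∣ (∑ i ∈ s, f i).den ∧ ratRed p (∑ i ∈ s, f i) = ∑ i ∈ s, ratRed p (f i) := by
  induction s using Finset.cons_induction with
  | empty =>
    refine ⟨?_, by simp [ratRed_zero]⟩
    simp only [Finset.sum_empty]
    show ¬ p ∣ (0 : ℚ).den
    have : (0 : ℚ).den = 1 := rfl
    rw [this, Nat.dvd_one]
    exact (Fact.out : p.Prime).one_lt.ne'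
  | cons a s ha ih =>
    rw [Finset.sum_cons, Finset.sum_cons]
    have h1 := h a (Finset.mem_cons_self a s)
    obtain ⟨ih1, ih2⟩ := ih (fun i hi => h i (Finset.mem_cons_of_mem hi))
    obtain ⟨g1, g2⟩ := ratRed_add h1 ih1
    exact ⟨g1, by rw [g2, ih2]⟩

lemma pochIntMap {R : Type*} [Ring R] (k : ℕ) (a : ℤ) :
    (ascPochhammer R k).eval ((a : ℤ) : R) = (((ascPochhammer ℤ k).eval a : ℤ) : R) := by
  rw [← ascPochhammer_map (Int.castRingHom R) k, eval_intCast_map, eq_intCast]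
  norm_cast

lemma red_aux {m k : ℕ} (hp : p = 2*m+1) (hk : k ≤ m) (x : ℤ)
    (hx : (x : ZMod p) = -(m : ZMod p)) (q : ℚ)
    (hq : q = (((ascPochhammer ℤ k).eval (-(m:ℤ)) : ℤ) : ℚ) * (((ascPochhammer ℤ k).eval x : ℤ) : ℚ) /
      (((ascPochhammer ℤ k).eval (-(2*(m:ℤ))) * (k.factorial : ℤ) : ℤ) : ℚ)) :
    ¬ p ∣ q.den ∧ ratRed p q = (m.choose k : ZMod p)^2 := by
  have hkp : k < p := by omega
  have hfac : ((k.factorial : ℤ) : ZMod p) ≠ 0 := by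
    push_cast
    rw [Ne, ZMod.natCast_eq_zero_iff]
    intro hdvd
    have := (Nat.Prime.dvd_factorial (Fact.out : p.Prime)).mp hdvd
    omega
  -- the denominator mod p
  have hNcast : ((-(2*(m:ℤ)) : ℤ) : ZMod p) = 1 := by
    have h0 : ((2*m+1 : ℕ) : ZMod p) = 0 := by rw [← hp]; exact ZMod.natCast_self p
    push_cast at h0 ⊢
    linear_combination -h0
  have cB : (((ascPochhammer ℤ k).eval (-(2*(m:ℤ))) * (k.factorial : ℤ) : ℤ) : ZMod p)
      = ((k.factorial : ZMod p))^2 := by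
    push_cast
    rw [← pochIntMap (R := ZMod p), hNcast]
    rw [ascPochhammer_eval_one]
    ring
  have hfacn : ((k.factorial : ℕ) : ZMod p) ≠ 0 := by
    intro h0; apply hfac; push_cast; exact h0
  have hBne : (((ascPochhammer ℤ k).eval (-(2*(m:ℤ))) * (k.factorial : ℤ) : ℤ) : ZMod p) ≠ 0 := by
    rw [cB]; exact pow_ne_zero 2 hfacn
  have hBQ : ((((ascPochhammer ℤ k).eval (-(2*(m:ℤ))) * (k.factorial : ℤ) : ℤ)) : ℚ) ≠ 0 := by
    intro h0
    apply hBne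
    have : ((ascPochhammer ℤ k).eval (-(2*(m:ℤ))) * (k.factorial : ℤ) : ℤ) = 0 := by
      exact_mod_cast h0
    rw [this]; simp
  have h : q * ((((ascPochhammer ℤ k).eval (-(2*(m:ℤ))) * (k.factorial : ℤ) : ℤ)) : ℚ)
      = (((ascPochhammer ℤ k).eval (-(m:ℤ)) * (ascPochhammer ℤ k).eval x : ℤ) : ℚ) := by
    rw [hq, div_mul_cancel₀ _ hBQ]; push_cast; ring
  obtain ⟨h1, h2⟩ := ratRed_spec hBne h
  refine ⟨h1, ?_⟩
  rw [h2, cB]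
  -- value of A1 mod p
  have intA1 : (ascPochhammer ℤ k).eval (-(m:ℤ)) = (-1)^k * ((k.factorial * m.choose k : ℕ) : ℤ) := by
    rw [ascPochhammer_eval_neg_eq_descPochhammer, descPochhammer_eval_eq_descFactorial,
      Nat.descFactorial_eq_factorial_mul_choose]
  have hA2 : (((ascPochhammer ℤ k).eval x : ℤ) : ZMod p)
      = (((ascPochhammer ℤ k).eval (-(m:ℤ)) : ℤ) : ZMod p) := by
    rw [← pochIntMap (R := ZMod p), ← pochIntMap (R := ZMod p), hx]
    push_cast
    ring_nf
  push_cast [hA2, intA1]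
  have neg1 : ((-1:ZMod p)^k) * ((-1:ZMod p)^k) = 1 := by
    rw [← pow_two, ← pow_mul, mul_comm, pow_mul]; simp
  field_simp
  linear_combination (((m.choose k : ZMod p))^2) * neg1

lemma m_cast_zero {m : ℕ} (hp : p = 2*m+1) : ((2*m+1 : ℕ) : ZMod p) = 0 := by
  rw [← hp]; exact ZMod.natCast_self p

lemma redP {N m k : ℕ} (hp : p = 2*m+1) (hN : N = 2*m) (hk : k ≤ m) :
    ¬ p ∣ (Pcoef N k).den ∧ ratRed p (Pcoef N k) = ((m.choose k : ZMod p))^2 := by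
  apply red_aux hp hk ((m:ℤ)+1)
  · have h0 := m_cast_zero hp
    push_cast at h0 ⊢
    linear_combination h0
  · rw [Pcoef, poch, poch, poch]
    rw [show (-(N:ℚ)/2) = (((-(m:ℤ)) : ℤ):ℚ) by subst hN; push_cast; ring]
    rw [show ((N:ℚ)/2+1) = ((((m:ℤ)+1) : ℤ):ℚ) by subst hN; push_cast; ring]
    rw [show (-(N:ℚ)) = (((-(2*(m:ℤ))) : ℤ):ℚ) by subst hN; push_cast; ring]
    rw [pochIntMap, pochIntMap, pochIntMap]
    push_cast
    ring

lemma redQ {N m k : ℕ} (hp : p = 2*m+1) (hN : N = 2*m) (hk : k ≤ m) :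
    ¬ p ∣ (Qcoef N k).den ∧ ratRed p (Qcoef N k) = ((m.choose k : ZMod p))^2 := by
  apply red_aux hp hk (-(3*(m:ℤ))-1)
  · have h0 := m_cast_zero hp
    push_cast at h0 ⊢
    linear_combination -h0
  · rw [Qcoef, poch, poch, poch]
    rw [show (-(N:ℚ)/2) = (((-(m:ℤ)) : ℤ):ℚ) by subst hN; push_cast; ring]
    rw [show (-(3*(N:ℚ))/2-1) = (((-(3*(m:ℤ))-1) : ℤ):ℚ) by subst hN; push_cast; ring]
    rw [show (-(N:ℚ)) = (((-(2*(m:ℤ))) : ℤ):ℚ) by subst hN; push_cast; ring]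
    rw [pochIntMap, pochIntMap, pochIntMap]
    push_cast
    ring



lemma sum_pow_z (m : ℕ) (hp : p = 2*m+1) (hm : 1 ≤ m) (j : ℕ) (hj : j < 2*(p-1)) :
    ∑ x : ZMod p, x^j = if j = p-1 then -1 else 0 := by
  have hcard : Fintype.card (ZMod p) = p := ZMod.card p
  rcases lt_or_ge j (p-1) with hlt | hge
  · rw [if_neg (by omega)]
    exact FiniteField.sum_pow_lt_card_sub_one (ZMod p) j (by rw [hcard]; omega)
  · have hj0 : 0 < j := by omega
    set r := j - (p-1) with hr
    have hrlt : r < p - 1 := by omega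
    have hsplit : ∑ x ∈ univ.erase (0 : ZMod p), x^j + (0:ZMod p)^j = ∑ x : ZMod p, x^j :=
      Finset.sum_erase_add _ _ (mem_univ 0)
    rw [← hsplit, zero_pow hj0.ne', add_zero]
    have hcongr : ∑ x ∈ univ.erase (0 : ZMod p), x^j = ∑ x ∈ univ.erase (0 : ZMod p), x^r := by
      apply Finset.sum_congr rfl
      intro x hx
      have hx0 : x ≠ 0 := (Finset.mem_erase.mp hx).1
      have : x^j = x^(r + (p-1)) := by rw [hr]; congr 1; omega
      rw [this, pow_add, ZMod.pow_card_sub_one_eq_one hx0, mul_one]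
    rw [hcongr]
    rcases Nat.eq_zero_or_pos r with hr0 | hrpos
    · rw [if_pos (by omega)]
      simp only [hr0, pow_zero]
      rw [Finset.sum_const, Finset.card_erase_of_mem (mem_univ 0), Finset.card_univ, hcard]
      rw [nsmul_eq_mul, mul_one]
      push_cast [Nat.cast_sub (by omega : 1 ≤ p)]
      simp
    · rw [if_neg (by omega)]
      have hsplit2 : ∑ x ∈ univ.erase (0 : ZMod p), x^r + (0:ZMod p)^r = ∑ x : ZMod p, x^r :=
        Finset.sum_erase_add _ _ (mem_univ 0)
      rw [zero_pow hrpos.ne', add_zero] at hsplit2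
      rw [hsplit2]
      exact FiniteField.sum_pow_lt_card_sub_one (ZMod p) r (by rw [hcard]; omega)

lemma sum_eval_z (m : ℕ) (hp : p = 2*m+1) (hm : 1 ≤ m) (f : (ZMod p)[X])
    (hdeg : f.natDegree < 2*(p-1)) :
    ∑ x : ZMod p, f.eval x = -(f.coeff (p-1)) := by
  calc ∑ x : ZMod p, f.eval x
      = ∑ x : ZMod p, ∑ i ∈ range (f.natDegree+1), f.coeff i * x^i := by
        apply Finset.sum_congr rfl; intro x _; exact eval_eq_sum_range x
    _ = ∑ i ∈ range (f.natDegree+1), ∑ x : ZMod p, f.coeff i * x^i := Finset.sum_comm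
    _ = ∑ i ∈ range (f.natDegree+1), (if i = p-1 then -(f.coeff i) else 0) := by
        apply Finset.sum_congr rfl; intro i hi
        rw [← Finset.mul_sum, sum_pow_z m hp hm i (by
          have := Finset.mem_range.mp hi; omega)]
        split <;> simp [mul_comm]
    _ = if p-1 ∈ range (f.natDegree+1) then -(f.coeff (p-1)) else 0 := by
        rw [Finset.sum_ite_eq' (range (f.natDegree+1)) (p-1) (fun i => -(f.coeff i))]
    _ = -(f.coeff (p-1)) := by
        split
        · rfl
        · rw [coeff_eq_zero_of_natDegree_lt (by
            rename_i h; rw [Finset.mem_range] at h; omega), neg_zero]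

lemma sqrt_count (m : ℕ) (hp : p = 2*m+1) (hm : 1 ≤ m) (t : ZMod p) :
    ((univ.filter (fun y : ZMod p => y^2 = t)).card : ZMod p) = 1 + t^m := by
  have h2ne : (2 : ZMod p) ≠ 0 := by
    have : ((2:ℕ) : ZMod p) ≠ 0 := by
      rw [Ne, ZMod.natCast_eq_zero_iff]
      intro h
      have := Nat.le_of_dvd (by norm_num) h
      omega
    exact_mod_cast this
  have hp2 : p / 2 = m := by omega
  by_cases ht : t = 0
  · subst ht
    have : univ.filter (fun y : ZMod p => y^2 = 0) = {0} := by
      ext y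
      simp [pow_eq_zero_iff]
    rw [this]
    simp [zero_pow (by omega : m ≠ 0)]
  · by_cases hsq : IsSquare t
    · obtain ⟨s, rfl⟩ := hsq
      have hs0 : s ≠ 0 := by rintro rfl; simp at ht
      have hsne : s ≠ -s := by
        intro h
        apply hs0
        have : (2:ZMod p) * s = 0 := by linear_combination h
        rcases mul_eq_zero.mp this with h' | h'
        · exact absurd h' h2ne
        · exact h'
      have hfilter : univ.filter (fun y : ZMod p => y^2 = s*s) = {s, -s} := by
        ext y
        simp only [Finset.mem_filter, Finset.mem_univ, true_and, Finset.mem_insert,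
          Finset.mem_singleton]
        constructor
        · intro h
          have : (y - s) * (y + s) = 0 := by linear_combination h
          rcases mul_eq_zero.mp this with h' | h'
          · left; linear_combination h'
          · right; linear_combination h'
        · rintro (rfl | rfl) <;> ring
      rw [hfilter, Finset.card_insert_of_notMem (by simpa using hsne), Finset.card_singleton]
      have heuler : (s*s)^m = 1 := by
        rw [← hp2]
        exact (ZMod.euler_criterion p ht).mp ⟨s, rfl⟩
      rw [heuler]
      norm_num
    · have hfilter : univ.filter (fun y : ZMod p => y^2 = t) = ∅ := by
        ext y
        simp only [Finset.mem_filter, Finset.mem_univ, true_and, Finset.notMem_empty,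
          iff_false]
        intro h
        exact hsq ⟨y, by rw [← h]; ring⟩
      rw [hfilter]
      have hsq1 : (t^m)^2 = 1 := by
        rw [← pow_mul, show m*2 = p-1 by omega]
        exact ZMod.pow_card_sub_one_eq_one ht
      have hne1 : t^m ≠ 1 := by
        intro h
        exact hsq ((ZMod.euler_criterion p ht).mpr (by rw [hp2]; exact h))
      have : (t^m - 1) * (t^m + 1) = 0 := by linear_combination hsq1
      rcases mul_eq_zero.mp this with h' | h'
      · exact absurd (by linear_combination h') hne1
      · have : t^m = -1 := by linear_combination h'
        rw [this]
        simp

def Hpoly (p m : ℕ) : (ZMod p)[X] := ∑ k ∈ Finset.range (m+1), C ((m.choose k : ZMod p)^2) * X^k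

lemma Hpoly_coeff (m k : ℕ) : (Hpoly p m).coeff k =
    if k < m+1 then ((m.choose k : ZMod p))^2 else 0 := by
  rw [Hpoly, finset_sum_coeff]
  simp only [coeff_C_mul, coeff_X_pow, mul_ite, mul_one, mul_zero]
  rw [Finset.sum_ite_eq (Finset.range (m+1)) k (fun j => ((m.choose j : ZMod p))^2)]
  simp [Finset.mem_range]

lemma Hpoly_natDegree (m : ℕ) : (Hpoly p m).natDegree ≤ m := by
  apply Polynomial.natDegree_le_iff_coeff_eq_zero.mpr
  intro k hk
  rw [Hpoly_coeff, if_neg (by omega)]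

lemma Hpoly_eval (m : ℕ) (z : ZMod p) :
    (Hpoly p m).eval z = ∑ k ∈ Finset.range (m+1), ((m.choose k : ZMod p))^2 * z^k := by
  rw [Hpoly, eval_finset_sum]
  simp

lemma card_fiberwise (z : ZMod p) :
    (Finset.univ.filter (fun xy : ZMod p × ZMod p =>
        xy.2 ^ 2 = xy.1 * (xy.1 - 1) * (xy.1 - z))).card =
    ∑ x : ZMod p, (univ.filter (fun y : ZMod p => y^2 = x*(x-1)*(x-z))).card := by
  rw [Finset.card_eq_sum_card_fiberwise
    (f := Prod.fst) (t := univ) (fun x _ => mem_univ _)]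
  apply Finset.sum_congr rfl
  intro x _
  apply Finset.card_nbij' (i := Prod.snd) (j := fun y => (x, y))
  · intro a ha
    simp only [Finset.mem_coe, Finset.mem_filter, Finset.mem_univ, true_and] at ha ⊢
    rw [← ha.2]; exact ha.1
  · intro y hy
    simp only [Finset.mem_coe, Finset.mem_filter, Finset.mem_univ, true_and] at hy ⊢
    simp [hy]
  · intro a ha
    simp only [Finset.mem_coe, Finset.mem_filter, Finset.mem_univ, true_and] at ha
    ext <;> simp [ha.2]
  · intro y hy
    rfl

lemma coeff_Gm (m : ℕ) (hp : p = 2*m+1) (hm : 1 ≤ m) (z : ZMod p) :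
    (((X * (X - C 1) * (X - C z)) ^ m : (ZMod p)[X]).coeff (p-1)) =
      (-1)^m * (Hpoly p m).eval z := by
  have e1 : (X : (ZMod p)[X]) - C 1 = X + C (-1) := by rw [map_neg]; ring
  have e2 : (X : (ZMod p)[X]) - C z = X + C (-z) := by rw [map_neg]; ring
  have hG : ((X * (X - C 1) * (X - C z)) ^ m : (ZMod p)[X]) =
      X^m * ((X + C (-1 : ZMod p))^m * (X + C (-z))^m) := by
    rw [e1, e2, mul_pow, mul_pow, mul_assoc]
  rw [hG, show p - 1 = m + m by omega, coeff_X_pow_mul]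
  rw [coeff_mul, Finset.Nat.sum_antidiagonal_eq_sum_range_succ_mk]
  rw [Hpoly_eval, Finset.mul_sum]
  apply Finset.sum_congr rfl
  intro i hi
  have him : i ≤ m := by rw [Finset.mem_range] at hi; omega
  rw [coeff_X_add_C_pow, coeff_X_add_C_pow]
  rw [show m - (m - i) = i by omega, Nat.choose_symm him]
  have : (-z : ZMod p)^i = (-1)^i * z^i := by rw [neg_pow]
  rw [this]
  have : ((-1 : ZMod p))^(m-i) * ((-1 : ZMod p))^i = (-1)^m := by
    rw [← pow_add, show m - i + i = m by omega]
  push_cast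
  linear_combination ((m.choose i : ZMod p))^2 * z^i * this


theorem stmt5 (p : ℕ) [Fact p.Prime] (hodd : p ≠ 2) (N : ℕ) (hN : N = p - 1) :
    (∀ k : ℕ, ¬ p ∣ ((Ppoly N * Qpoly N).coeff k).den) ∧
    ∀ z : ZMod p, z ≠ 0 → z ≠ 1 →
      (∑ k ∈ Finset.range (N + 1), ratRed p ((Ppoly N * Qpoly N).coeff k) * z ^ k) =
        ((Finset.univ.filter
            (fun xy : ZMod p × ZMod p =>
              xy.2 ^ 2 = xy.1 * (xy.1 - 1) * (xy.1 - z))).card : ZMod p) ^ 2 := by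
  have hp2 : p.Prime := Fact.out
  obtain ⟨m, hpm⟩ : ∃ m, p = 2*m+1 := by
    rcases hp2.eq_two_or_odd' with h | h
    · exact absurd h hodd
    · obtain ⟨m, hm⟩ := h; exact ⟨m, by omega⟩
  have hm1 : 1 ≤ m := by
    have := hp2.two_le
    omega
  have hN2 : N = 2*m := by omega
  have hNdiv : N / 2 = m := by omega
  have hone : ¬ p ∣ (0:ℚ).den := by
    have h01 : (0 : ℚ).den = 1 := rfl
    rw [h01, Nat.dvd_one]
    exact hp2.one_lt.ne'
  have redPc : ∀ i, ¬ p ∣ ((Ppoly N).coeff i).den ∧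
      ratRed p ((Ppoly N).coeff i) = (Hpoly p m).coeff i := by
    intro i
    have hco : (Ppoly N).coeff i = if i < m+1 then Pcoef N i else 0 := by
      rw [Ppoly, hNdiv, finset_sum_coeff]
      simp only [coeff_C_mul, coeff_X_pow, mul_ite, mul_one, mul_zero]
      rw [Finset.sum_ite_eq (Finset.range (m+1)) i (fun j => Pcoef N j)]
      simp [Finset.mem_range]
    rw [hco, Hpoly_coeff]
    split
    · exact redP hpm hN2 (by omega)
    · exact ⟨hone, ratRed_zero⟩
  have redQc : ∀ i, ¬ p ∣ ((Qpoly N).coeff i).den ∧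
      ratRed p ((Qpoly N).coeff i) = (Hpoly p m).coeff i := by
    intro i
    have hco : (Qpoly N).coeff i = if i < m+1 then Qcoef N i else 0 := by
      rw [Qpoly, hNdiv, finset_sum_coeff]
      simp only [coeff_C_mul, coeff_X_pow, mul_ite, mul_one, mul_zero]
      rw [Finset.sum_ite_eq (Finset.range (m+1)) i (fun j => Qcoef N j)]
      simp [Finset.mem_range]
    rw [hco, Hpoly_coeff]
    split
    · exact redQ hpm hN2 (by omega)
    · exact ⟨hone, ratRed_zero⟩
  have hcden : ∀ k, ¬ p ∣ ((Ppoly N * Qpoly N).coeff k).den ∧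
      ratRed p ((Ppoly N * Qpoly N).coeff k) = (Hpoly p m * Hpoly p m).coeff k := by
    intro k
    rw [coeff_mul, coeff_mul]
    have hterm : ∀ x ∈ Finset.HasAntidiagonal.antidiagonal k,
        ¬ p ∣ ((Ppoly N).coeff x.1 * (Qpoly N).coeff x.2).den :=
      fun x _ => (ratRed_mul (redPc x.1).1 (redQc x.2).1).1
    obtain ⟨hd, hs⟩ := ratRed_sum hterm
    refine ⟨hd, ?_⟩
    rw [hs]
    apply Finset.sum_congr rfl
    intro x _
    rw [(ratRed_mul (redPc x.1).1 (redQc x.2).1).2, (redPc x.1).2, (redQc x.2).2]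
  refine ⟨fun k => (hcden k).1, ?_⟩
  intro z hz0 hz1
  have hdeg : (Hpoly p m * Hpoly p m).natDegree < N + 1 := by
    have h1 := Polynomial.natDegree_mul_le (p := Hpoly p m) (q := Hpoly p m)
    have h2 := Hpoly_natDegree (p := p) m
    omega
  have hLHS : (∑ k ∈ Finset.range (N + 1), ratRed p ((Ppoly N * Qpoly N).coeff k) * z ^ k)
      = (Hpoly p m).eval z * (Hpoly p m).eval z := by
    rw [← eval_mul]
    rw [eval_eq_sum_range' hdeg z]
    apply Finset.sum_congr rfl
    intro k _
    rw [(hcden k).2]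
  rw [hLHS]
  -- now the point count
  set G : (ZMod p)[X] := X * (X - C 1) * (X - C z) with hGdef
  have hdegG : G.natDegree ≤ 3 := by
    have h1 : ((X : (ZMod p)[X]) * (X - C 1)).natDegree ≤ 2 := by
      apply le_trans Polynomial.natDegree_mul_le
      rw [natDegree_X, natDegree_X_sub_C]
    apply le_trans Polynomial.natDegree_mul_le
    rw [natDegree_X_sub_C]
    omega
  have hdegGm : (G^m).natDegree < 2*(p-1) := by
    have h1 : (G^m).natDegree ≤ m * G.natDegree := Polynomial.natDegree_pow_le
    have h2 : m * G.natDegree ≤ m * 3 := Nat.mul_le_mul_left m hdegG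
    omega
  have heval : ∀ x : ZMod p, (G^m).eval x = (x*(x-1)*(x-z))^m := by
    intro x; simp [hGdef]
  have hcast : ((Finset.univ.filter
      (fun xy : ZMod p × ZMod p =>
        xy.2 ^ 2 = xy.1 * (xy.1 - 1) * (xy.1 - z))).card : ZMod p)
      = ∑ x : ZMod p, (1 + (x*(x-1)*(x-z))^m) := by
    rw [card_fiberwise z]
    push_cast
    apply Finset.sum_congr rfl
    intro x _
    rw [sqrt_count m hpm hm1]
  have h1sum : ∑ x : ZMod p, (1 : ZMod p) = 0 := by
    rw [Finset.sum_const, Finset.card_univ, ZMod.card, nsmul_eq_mul, mul_one, ZMod.natCast_self]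
  have hfin : ((Finset.univ.filter
      (fun xy : ZMod p × ZMod p =>
        xy.2 ^ 2 = xy.1 * (xy.1 - 1) * (xy.1 - z))).card : ZMod p)
      = -((-1)^m * (Hpoly p m).eval z) := by
    rw [hcast, Finset.sum_add_distrib, h1sum, zero_add]
    have : ∑ x : ZMod p, (x*(x-1)*(x-z))^m = ∑ x : ZMod p, (G^m).eval x := by
      apply Finset.sum_congr rfl
      intro x _
      rw [heval]
    rw [this, sum_eval_z m hpm hm1 _ hdegGm, coeff_Gm m hpm hm1 z]
  rw [hfin]
  have hsq : ((-1 : ZMod p)^m)^2 = 1 := by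
    rw [← pow_mul, mul_comm, pow_mul]; simp
  linear_combination (-(((Hpoly p m).eval z)^2)) * hsq
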